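/- arXiv:2312.11702 — 4 statements merged into one kernel-verified Lean document; each statement's English description precedes it below -/
import Mathlib

section
/- Let 1 ≤ n ≤ m be integers and A ∈ Mat_{n×m}(ℚ_p) with SN(A) = (λ_1,…,λ_n). Then for every 1 ≤ k ≤ n, the sum of the k smallest singular numbers satisfies λ_n + λ_{n−1} + … + λ_{n−k+1} = min over all C ∈ Mat_{k×n}(ℤ_p) and D ∈ Mat_{m×k}(ℤ_p) of val_p(det(C·A·D)), and this infimum is attained. (This is the variational/min characterization of singular numbers; integral matrices C and D encode the rank-k projections and k-dimensional subspaces of the informal statement.) -/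
/-!
Statement 0: variational characterization of the singular numbers of a `p`-adic matrix:
for `A ∈ Mat_{n×m}(ℚ_p)` with singular numbers `λ₁ ≥ … ≥ λ_n` and `1 ≤ k ≤ n ≤ m`,
`λ_n + … + λ_{n-k+1}` is the minimum (attained) over `C ∈ Mat_{k×n}(ℤ_p)`,
`D ∈ Mat_{m×k}(ℤ_p)` of `val_p (det (C·A·D))`.
-/

noncomputable section

/-- `p^a ∈ ℚ_p` for `a ∈ ℤ ∪ {∞}`, with the convention `p^∞ = 0`. -/
def qppow (p : ℕ) [Fact p.Prime] (a : WithTop ℤ) : ℚ_[p] :=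
  if h : a = ⊤ then 0 else (p : ℚ_[p]) ^ (a.untop h)

/-- The rectangular `n × m` diagonal matrix whose `(i,i)` entry is `p^(f i)`. -/
def rectDiag (p : ℕ) [Fact p.Prime] (n m : ℕ) (f : ℕ → WithTop ℤ) :
    Matrix (Fin n) (Fin m) ℚ_[p] :=
  Matrix.of fun i j => if (i : ℕ) = (j : ℕ) then qppow p (f (i : ℕ)) else 0

/-- `s` is the (weakly decreasing) tuple of singular numbers of the `n × m` matrix `A`
over `ℚ_p`: there are `U ∈ GL_n(ℤ_p)`, `V ∈ GL_m(ℤ_p)` with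
`A = U · diag_{n×m}(p^{s₁},…) · V`. -/
def IsSN (p : ℕ) [Fact p.Prime] (n m : ℕ) (A : Matrix (Fin n) (Fin m) ℚ_[p])
    (s : Fin (min n m) → WithTop ℤ) : Prop :=
  Antitone s ∧ ∃ (U : (Matrix (Fin n) (Fin n) ℤ_[p])ˣ) (V : (Matrix (Fin m) (Fin m) ℤ_[p])ˣ),
    A = (U.val.map (fun x : ℤ_[p] => (x : ℚ_[p]))) *
      rectDiag p n m (fun i => if h : i < min n m then s ⟨i, h⟩ else ⊤) *
      (V.val.map (fun x : ℤ_[p] => (x : ℚ_[p])))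

open scoped Classical in
/-- The `p`-adic valuation `ℚ_p → ℤ ∪ {∞}`, with `val_p 0 = ∞`. -/
def padicValT (p : ℕ) [Fact p.Prime] (x : ℚ_[p]) : WithTop ℤ :=
  if x = 0 then ⊤ else (x.valuation : WithTop ℤ)

section Aux

variable {p : ℕ} [Fact p.Prime]

lemma padicValT_mul (x y : ℚ_[p]) :
    padicValT p (x * y) = padicValT p x + padicValT p y := by
  unfold padicValT
  by_cases hx : x = 0
  · simp [hx]
  by_cases hy : y = 0
  · simp [hy]
  rw [if_neg (mul_ne_zero hx hy), if_neg hx, if_neg hy, ← WithTop.coe_add,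
    WithTop.coe_eq_coe, Padic.valuation_mul hx hy]

lemma le_padicValT_add {c : WithTop ℤ} {x y : ℚ_[p]}
    (hx : c ≤ padicValT p x) (hy : c ≤ padicValT p y) :
    c ≤ padicValT p (x + y) := by
  unfold padicValT at *
  by_cases hxy : x + y = 0
  · simp [hxy]
  rw [if_neg hxy]
  by_cases h0 : x = 0
  · rw [h0, zero_add] at hxy ⊢
    rwa [if_neg hxy] at hy
  by_cases h1 : y = 0
  · rw [h1, add_zero] at hxy ⊢
    rwa [if_neg hxy] at hx
  rw [if_neg h0] at hx; rw [if_neg h1] at hy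
  calc c ≤ min (x.valuation : WithTop ℤ) (y.valuation : WithTop ℤ) := le_min hx hy
  _ ≤ _ := by
      rw [← WithTop.coe_min, WithTop.coe_le_coe]
      exact Padic.le_valuation_add hxy

lemma le_padicValT_sum {c : WithTop ℤ} {ι : Type*} (t : Finset ι) (f : ι → ℚ_[p])
    (h : ∀ i ∈ t, c ≤ padicValT p (f i)) :
    c ≤ padicValT p (∑ i ∈ t, f i) := by
  classical
  induction t using Finset.induction with
  | empty => simp [padicValT]
  | insert _ _ hns ih =>
      rw [Finset.sum_insert hns]
      exact le_padicValT_add (h _ (Finset.mem_insert_self _ _))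
        (ih fun i hi => h i (Finset.mem_insert_of_mem hi))

lemma padicValT_coe_nonneg (x : ℤ_[p]) : 0 ≤ padicValT p (x : ℚ_[p]) := by
  unfold padicValT
  by_cases hx : (x : ℚ_[p]) = 0
  · simp [hx]
  rw [if_neg hx]
  exact_mod_cast PadicInt.valuation_coe_nonneg (x := x)

lemma padicValT_qppow (a : WithTop ℤ) : padicValT p (qppow p a) = a := by
  unfold qppow padicValT
  by_cases ha : a = ⊤
  · simp [ha]
  rw [dif_neg ha]
  have hp : (p : ℚ_[p]) ≠ 0 := by
    exact_mod_cast (Nat.Prime.ne_zero (Fact.out : p.Prime))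
  rw [if_neg (zpow_ne_zero _ hp)]
  have hval : ((p : ℚ_[p]) ^ (a.untop ha)).valuation = a.untop ha := by
    have h1 : (p : ℝ) ^ (-((p : ℚ_[p]) ^ (a.untop ha)).valuation) = (p : ℝ) ^ (-(a.untop ha)) := by
      rw [← Padic.norm_eq_zpow_neg_valuation (zpow_ne_zero _ hp), Padic.norm_p_zpow]
    have := (zpow_right_strictMono₀
      (by exact_mod_cast (Fact.out : p.Prime).one_lt : (1:ℝ) < p)).injective h1
    exact neg_injective this
  rw [hval]
  exact WithTop.coe_untop a ha

lemma padicValT_prod {ι : Type*} (t : Finset ι) (f : ι → ℚ_[p]) :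
    padicValT p (∏ i ∈ t, f i) = ∑ i ∈ t, padicValT p (f i) := by
  classical
  induction t using Finset.induction with
  | empty => simp [padicValT]
  | insert _ _ hns ih =>
      rw [Finset.prod_insert hns, Finset.sum_insert hns, padicValT_mul, ih]

lemma orderEmb_le {n k : ℕ} (e : Fin k ↪o Fin n) (j : Fin k) :
    (e j : ℕ) ≤ n - k + j := by
  have key : ∀ t (h : (j : ℕ) + t < k), (e j : ℕ) + t ≤ (e ⟨(j : ℕ) + t, h⟩ : ℕ) := by
    intro t
    induction t with
    | zero => intro h; simp
    | succ t ih =>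
        intro h
        have h' : (j : ℕ) + t < k := by omega
        have h2 : (⟨(j : ℕ) + t, h'⟩ : Fin k) < ⟨(j : ℕ) + (t + 1), h⟩ :=
          Fin.mk_lt_mk.mpr (by omega)
        have h3 : (e ⟨(j : ℕ) + t, h'⟩ : ℕ) < (e ⟨(j : ℕ) + (t + 1), h⟩ : ℕ) :=
          e.strictMono h2
        have := ih h'
        omega
  have hj : (j : ℕ) < k := j.2
  have := key (k - 1 - j) (by omega)
  have hlt : (e ⟨(j : ℕ) + (k - 1 - (j : ℕ)), by omega⟩ : ℕ) < n := (e _).2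
  omega

lemma sum_min_le {n k : ℕ} (hkn : k ≤ n) (s : Fin n → WithTop ℤ)
    (hs : Antitone s) (g : Fin k → Fin n) (hg : Function.Injective g) :
    (∑ j : Fin k, s ⟨n - k + (j : ℕ), by omega⟩) ≤ ∑ a : Fin k, s (g a) := by
  classical
  set T : Finset (Fin n) := Finset.image g Finset.univ with hT
  have hcard : T.card = k := by
    rw [hT, Finset.card_image_of_injective _ hg, Finset.card_univ, Fintype.card_fin]
  set e := T.orderEmbOfFin hcard with he
  have hTe : T = Finset.image e Finset.univ := by
    apply Finset.coe_injective
    conv_rhs => rw [Finset.coe_image, Finset.coe_univ, Set.image_univ, he,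
      Finset.range_orderEmbOfFin]
  rw [show (∑ a : Fin k, s (g a)) = ∑ i ∈ T, s i from
    (Finset.sum_image (fun a _ b _ h => hg h)).symm]
  rw [hTe, Finset.sum_image (fun a _ b _ h => e.injective h)]
  refine Finset.sum_le_sum fun j _ => ?_
  exact hs (by simpa [Fin.le_def] using orderEmb_le e j)

end Aux

theorem statement0 (p : ℕ) [Fact p.Prime] (n m k : ℕ)
    (hn : 1 ≤ n) (hnm : n ≤ m) (hk : 1 ≤ k) (hkn : k ≤ n)
    (A : Matrix (Fin n) (Fin m) ℚ_[p]) (s : Fin (min n m) → WithTop ℤ)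
    (hs : IsSN p n m A s) :
    IsLeast
      {v : WithTop ℤ |
        ∃ (C : Matrix (Fin k) (Fin n) ℤ_[p]) (D : Matrix (Fin m) (Fin k) ℤ_[p]),
          v = padicValT p
            ((C.map (fun x : ℤ_[p] => (x : ℚ_[p])) * A *
              D.map (fun x : ℤ_[p] => (x : ℚ_[p]))).det)}
      (∑ j ∈ Finset.range k, s ⟨n - 1 - j, by omega⟩) := by
  classical
  obtain ⟨hanti, U, V, hA⟩ := hs
  have hmn : min n m = n := min_eq_left hnm
  set cf : ℤ_[p] →+* ℚ_[p] := PadicInt.Coe.ringHom with hcf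
  have hcoe : (fun x : ℤ_[p] => (x : ℚ_[p])) = ⇑cf := rfl
  rw [hcoe] at hA ⊢
  set σf : ℕ → WithTop ℤ := fun i => if h : i < min n m then s ⟨i, h⟩ else ⊤ with hσf
  set Λ : Matrix (Fin n) (Fin m) ℚ_[p] := rectDiag p n m σf with hΛ
  set s' : Fin n → WithTop ℤ := fun i => s ⟨(i : ℕ), by omega⟩ with hs'
  have hanti' : Antitone s' := fun i j hij => hanti hij
  have hσs : ∀ i : Fin n, σf (i : ℕ) = s' i := by
    intro i
    rw [hσf]
    exact dif_pos (by omega)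
  -- extended antitone function on ℕ
  set t : ℕ → WithTop ℤ := fun i => if h : i < n then s' ⟨i, h⟩ else ⊤ with ht
  have htarget : (∑ j : Fin k, s' ⟨n - k + (j : ℕ), by omega⟩)
      = ∑ j ∈ Finset.range k, s ⟨n - 1 - j, by omega⟩ := by
    have h1 : (∑ j : Fin k, s' ⟨n - k + (j : ℕ), by omega⟩)
        = ∑ j ∈ Finset.range k, t (n - k + j) := by
      rw [← Fin.sum_univ_eq_sum_range (fun j => t (n - k + j)) k]
      refine Finset.sum_congr rfl fun j _ => ?_
      rw [ht]
      simp only []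
      rw [dif_pos (by omega : n - k + (j : ℕ) < n)]
    rw [h1, ← Finset.sum_range_reflect (fun j => t (n - k + j)) k]
    refine Finset.sum_congr rfl fun j hj => ?_
    rw [Finset.mem_range] at hj
    rw [show n - k + (k - 1 - j) = n - 1 - j by omega, ht]
    simp only []
    rw [dif_pos (by omega : n - 1 - j < n)]
  rw [← htarget]
  -- index embeddings
  have hik : ∀ a : Fin k, n - k + (a : ℕ) < n := fun a => by omega
  have hjk : ∀ a : Fin k, n - k + (a : ℕ) < m := fun a => by omega
  set i₀ : Fin k → Fin n := fun a => ⟨n - k + (a : ℕ), hik a⟩ with hi₀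
  set j₀ : Fin k → Fin m := fun a => ⟨n - k + (a : ℕ), hjk a⟩ with hj₀
  constructor
  · -- membership: explicit C, D attaining the minimum
    set Ek : Matrix (Fin k) (Fin n) ℤ_[p] :=
      Matrix.of fun a i => if i = i₀ a then 1 else 0 with hEk
    set Fk : Matrix (Fin m) (Fin k) ℤ_[p] :=
      Matrix.of fun j b => if j = j₀ b then 1 else 0 with hFk
    refine ⟨Ek * (↑U⁻¹ : Matrix (Fin n) (Fin n) ℤ_[p]),
      (↑V⁻¹ : Matrix (Fin m) (Fin m) ℤ_[p]) * Fk, ?_⟩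
    have hbc : ((U⁻¹ : (Matrix (Fin n) (Fin n) ℤ_[p])ˣ).val.map ⇑cf) * (U.val.map ⇑cf) = 1 := by
      rw [← Matrix.map_mul, Units.inv_mul, Matrix.map_one _ cf.map_zero cf.map_one]
    have hde : (V.val.map ⇑cf) * ((V⁻¹ : (Matrix (Fin m) (Fin m) ℤ_[p])ˣ).val.map ⇑cf) = 1 := by
      rw [← Matrix.map_mul, Units.mul_inv, Matrix.map_one _ cf.map_zero cf.map_one]
    have hprod : (Ek * (↑U⁻¹ : Matrix (Fin n) (Fin n) ℤ_[p])).map ⇑cf * A *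
        (((↑V⁻¹ : Matrix (Fin m) (Fin m) ℤ_[p]) * Fk).map ⇑cf)
        = Ek.map ⇑cf * Λ * Fk.map ⇑cf := by
      rw [hA, Matrix.map_mul, Matrix.map_mul]
      calc Ek.map ⇑cf * ((U⁻¹ : (Matrix (Fin n) (Fin n) ℤ_[p])ˣ).val.map ⇑cf) *
            (U.val.map ⇑cf * Λ * V.val.map ⇑cf) *
            (((V⁻¹ : (Matrix (Fin m) (Fin m) ℤ_[p])ˣ).val.map ⇑cf) * Fk.map ⇑cf)
          = Ek.map ⇑cf * ((((U⁻¹ : (Matrix (Fin n) (Fin n) ℤ_[p])ˣ).val.map ⇑cf) * (U.val.map ⇑cf)) *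
            (Λ * ((V.val.map ⇑cf * ((V⁻¹ : (Matrix (Fin m) (Fin m) ℤ_[p])ˣ).val.map ⇑cf)) *
              Fk.map ⇑cf))) := by
            simp only [Matrix.mul_assoc]
        _ = Ek.map ⇑cf * Λ * Fk.map ⇑cf := by
            rw [hbc, hde, Matrix.one_mul, Matrix.one_mul, Matrix.mul_assoc]
    rw [hprod]
    have hG : Ek.map ⇑cf * Λ * Fk.map ⇑cf
        = Matrix.diagonal fun a : Fin k => qppow p (s' (i₀ a)) := by
      have hrow : ∀ (a : Fin k) (j : Fin m), (Ek.map ⇑cf * Λ) a j = Λ (i₀ a) j := by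
        intro a j
        rw [Matrix.mul_apply, Finset.sum_eq_single (i₀ a)]
        · simp [hEk, Matrix.map_apply]
        · intro i _ hne
          simp [hEk, Matrix.map_apply, hne]
        · simp
      ext a b
      rw [Matrix.mul_apply, Finset.sum_eq_single (j₀ b)]
      · rw [hrow]
        simp only [hFk, Matrix.map_apply, Matrix.of_apply, if_pos rfl, map_one, mul_one]
        rw [hΛ]
        simp only [rectDiag, Matrix.of_apply]
        have hval : ((i₀ a : ℕ) = (j₀ b : ℕ)) ↔ a = b := by
          rw [hi₀, hj₀]
          constructor
          · intro h; exact Fin.ext (by simpa using Nat.add_left_cancel h)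
          · intro h; rw [h]
        rw [Matrix.diagonal]
        simp only [Matrix.of_apply]
        by_cases hab : a = b
        · rw [if_pos (hval.mpr hab), if_pos hab, hσs (i₀ a)]
          simp
        · rw [if_neg (fun h => hab (hval.mp h)), if_neg hab]
          simp
      · intro j _ hne
        simp [hFk, Matrix.map_apply, hne]
      · simp
    rw [hG, Matrix.det_diagonal, padicValT_prod]
    refine (Finset.sum_congr rfl fun a _ => ?_).symm
    rw [padicValT_qppow]
  · -- lower bound
    rintro v ⟨C, D, rfl⟩
    set E : Matrix (Fin k) (Fin n) ℤ_[p] := C * U.val with hE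
    set F : Matrix (Fin m) (Fin k) ℤ_[p] := V.val * D with hF
    have hCAD : C.map ⇑cf * A * D.map ⇑cf = E.map ⇑cf * (Λ * F.map ⇑cf) := by
      rw [hA, hE, hF, Matrix.map_mul, Matrix.map_mul]
      simp only [Matrix.mul_assoc]
    set N : Fin n → Fin k → ℚ_[p] :=
      fun i b => qppow p (s' i) * cf (F (Fin.castLE hnm i) b) with hN
    have hΛF : ∀ (i : Fin n) (b : Fin k), (Λ * F.map ⇑cf) i b = N i b := by
      intro i b
      rw [Matrix.mul_apply, Finset.sum_eq_single (Fin.castLE hnm i)]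
      · rw [hΛ]
        simp only [rectDiag, Matrix.of_apply]
        rw [if_pos (by simp), hσs, hN, Matrix.map_apply]
      · intro j _ hne
        rw [hΛ]
        simp only [rectDiag, Matrix.of_apply]
        rw [if_neg fun h => hne (Fin.ext (by simp [← h])), zero_mul]
      · simp
    set M : Matrix (Fin k) (Fin k) ℚ_[p] := E.map ⇑cf * (Λ * F.map ⇑cf) with hM
    have hMrows : ∀ a : Fin k, M a = ∑ i : Fin n, cf (E a i) • N i := by
      intro a
      funext b
      rw [Finset.sum_apply]
      rw [hM, Matrix.mul_apply]
      refine Finset.sum_congr rfl fun i _ => ?_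
      rw [Pi.smul_apply, smul_eq_mul, hΛF, Matrix.map_apply]
    have hdet : M.det
        = ∑ r : Fin k → Fin n, (∏ a, cf (E a (r a)))
            • Matrix.detRowAlternating (fun a => N (r a)) := by
      have h1 : M.det = Matrix.detRowAlternating (fun a => ∑ i : Fin n, cf (E a i) • N i) := by
        show Matrix.detRowAlternating M = _
        congr 1
        funext a
        exact hMrows a
      rw [h1]
      have h2 := (Matrix.detRowAlternating (R := ℚ_[p]) (n := Fin k)).toMultilinearMap.map_sum
        (g := fun (a : Fin k) (i : Fin n) => cf (E a i) • N i)
      rw [AlternatingMap.coe_multilinearMap] at h2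
      rw [h2]
      refine Finset.sum_congr rfl fun r _ => ?_
      have h3 := (Matrix.detRowAlternating (R := ℚ_[p]) (n := Fin k)).toMultilinearMap.map_smul_univ
        (fun a => cf (E a (r a))) (fun a => N (r a))
      rw [AlternatingMap.coe_multilinearMap] at h3
      rw [h3]
    rw [hCAD, hdet]
    refine le_padicValT_sum _ _ fun r _ => ?_
    by_cases hr : Function.Injective r
    · have hNsub : Matrix.detRowAlternating (fun a => N (r a))
          = (∏ a, qppow p (s' (r a))) *
            ((F.submatrix (fun a => Fin.castLE hnm (r a)) id).map ⇑cf).det := by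
        have : (fun a => N (r a))
            = Matrix.of fun a b => qppow p (s' (r a)) *
                ((F.submatrix (fun a' => Fin.castLE hnm (r a')) id).map ⇑cf) a b := by
          funext a b
          simp [hN, Matrix.submatrix, Matrix.map_apply]
        show Matrix.det (Matrix.of fun a b => N (r a) b) = _
        rw [show (Matrix.of fun a b => N (r a) b) = Matrix.of fun a b =>
            qppow p (s' (r a)) *
              ((F.submatrix (fun a' => Fin.castLE hnm (r a')) id).map ⇑cf) a b from this]
        exact Matrix.det_mul_column _ _
      rw [hNsub, smul_eq_mul, padicValT_mul, padicValT_mul]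
      have hb1 : (0 : WithTop ℤ) ≤ padicValT p (∏ a, cf (E a (r a))) := by
        rw [← map_prod]
        exact padicValT_coe_nonneg _
      have hb2 : (∑ j : Fin k, s' ⟨n - k + (j : ℕ), by omega⟩)
          ≤ padicValT p (∏ a, qppow p (s' (r a))) := by
        rw [padicValT_prod]
        calc (∑ j : Fin k, s' ⟨n - k + (j : ℕ), by omega⟩) ≤ ∑ a, s' (r a) :=
              sum_min_le hkn s' hanti' r hr
        _ = _ := by
              refine Finset.sum_congr rfl fun a _ => ?_
              rw [padicValT_qppow]
      have hb3 : (0 : WithTop ℤ)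
          ≤ padicValT p ((F.submatrix (fun a => Fin.castLE hnm (r a)) id).map ⇑cf).det := by
        rw [← RingHom.mapMatrix_apply, ← RingHom.map_det]
        exact padicValT_coe_nonneg _
      calc (∑ j : Fin k, s' ⟨n - k + (j : ℕ), by omega⟩)
          = 0 + ((∑ j : Fin k, s' ⟨n - k + (j : ℕ), by omega⟩) + 0) := by
            rw [add_zero, zero_add]
        _ ≤ _ := add_le_add hb1 (add_le_add hb2 hb3)
    · have : Matrix.detRowAlternating (fun a => N (r a)) = 0 := by
        obtain ⟨a, b, hab, hne⟩ := Function.not_injective_iff.mp hr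
        exact AlternatingMap.map_eq_zero_of_eq _ _ (by rw [hab]) hne
      rw [this, smul_zero]
      simp [padicValT]
end
end

section
/- Fix t ∈ (0,1). For each i ∈ ℤ let P_i be the law on (ℝ_{≥0})^ℕ of an iid sequence of exponential random variables of rate t^i (density t^i·e^{−t^i x} on ℝ_{≥0}), and let P := ∏_{i∈ℤ} P_i be the product probability measure on Ω := ∏_{i∈ℤ} (ℝ_{≥0})^ℕ. For T ≥ 0 and a = (a_1,a_2,…) ∈ (ℝ_{≥0})^ℕ define jumps(T,a) := sup{n ≥ 0 : a_1 + … + a_n ≤ T}. Then the set of ω ∈ Ω such that Σ_{j=i}^∞ jumps(T, ω_j) < ∞ for every T ≥ 0 and every i ∈ ℤ has P-measure 1. -/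
/-!
Statement 4 (Lemma `tomega_full_measure`): let `P` be the product over `i ∈ ℤ` of laws of
iid sequences of exponential variables of rate `tⁱ` on `Ω = ∏_{i∈ℤ} ℝ_{≥0}^ℕ` (encoded as
`ℤ → ℕ → ℝ`, each coordinate having exponential law supported on `ℝ_{≥0}`; the product
measure is characterized by its values on cylinder sets).  Then, `P`-almost surely, for
every `T ≥ 0` and `i ∈ ℤ` the total number `Σ_{j≥i} jumps(T, ω_j)` is finite, where
`jumps(T,a) = sup{n ≥ 0 : a_1 + … + a_n ≤ T}`.
-/

open MeasureTheory Filter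
open scoped ENNReal

noncomputable section

/-- The exponential law of rate `rate` on `ℝ` (supported on `ℝ_{≥0}`,
with density `rate · e^{−rate·x}` there). -/
def expLaw (rate : ℝ) : Measure ℝ :=
  volume.withDensity fun x => ENNReal.ofReal (if 0 ≤ x then rate * Real.exp (-(rate * x)) else 0)

/-- `jumps T a = sup{n ≥ 0 : a 0 + … + a (n-1) ≤ T}`, valued in `ℝ≥0∞`. -/
def jumps (T : ℝ) (a : ℕ → ℝ) : ℝ≥0∞ :=
  ⨆ (n : ℕ) (_ : ∑ k ∈ Finset.range n, a k ≤ T), (n : ℝ≥0∞)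

lemma expLaw_eq (r : ℝ) : expLaw r = volume.withDensity (ProbabilityTheory.exponentialPDF r) := by
  unfold expLaw
  congr 1
  ext x
  rw [ProbabilityTheory.exponentialPDF_eq]

lemma expLaw_apply (r : ℝ) {s : Set ℝ} (hs : MeasurableSet s) :
    expLaw r s = ∫⁻ x in s, ProbabilityTheory.exponentialPDF r x := by
  rw [expLaw_eq, withDensity_apply _ hs]

lemma expLaw_Iio_zero (r : ℝ) : expLaw r (Set.Iio 0) = 0 := by
  rw [expLaw_apply r measurableSet_Iio]
  exact ProbabilityTheory.lintegral_exponentialPDF_of_nonpos le_rfl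

lemma expLaw_Iic {r : ℝ} (hr : 0 < r) (x : ℝ) :
    expLaw r (Set.Iic x) = ENNReal.ofReal (if 0 ≤ x then 1 - Real.exp (-(r * x)) else 0) := by
  rw [expLaw_apply r measurableSet_Iic]
  exact ProbabilityTheory.lintegral_exponentialPDF_eq_antiDeriv hr x

lemma expLaw_Iic_lt_one {r : ℝ} (hr : 0 < r) (x : ℝ) : expLaw r (Set.Iic x) < 1 := by
  rw [expLaw_Iic hr x]
  rw [ENNReal.ofReal_lt_one]
  split_ifs with h
  · have := Real.exp_pos (-(r * x)); linarith
  · norm_num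

lemma expLaw_Iic_le {r : ℝ} (hr : 0 < r) {x : ℝ} (hx : 0 ≤ x) :
    expLaw r (Set.Iic x) ≤ ENNReal.ofReal (r * x) := by
  rw [expLaw_Iic hr x, if_pos hx]
  apply ENNReal.ofReal_le_ofReal
  have := Real.add_one_le_exp (-(r * x))
  linarith

lemma jumps_le {T : ℝ} {a : ℕ → ℝ} {m : ℕ}
    (h : ∀ n, (∑ k ∈ Finset.range n, a k ≤ T) → n ≤ m) : jumps T a ≤ (m : ℝ≥0∞) := by
  refine iSup₂_le fun n hn => ?_
  exact_mod_cast h n hn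

theorem statement4 (t : ℝ) (ht0 : 0 < t) (ht1 : t < 1)
    (P : Measure (ℤ → ℕ → ℝ)) (hP : IsProbabilityMeasure P)
    (hcyl : ∀ s : Finset (ℤ × ℕ), ∀ B : ℤ × ℕ → Set ℝ, (∀ x ∈ s, MeasurableSet (B x)) →
      P {ω | ∀ x ∈ s, ω x.1 x.2 ∈ B x} = ∏ x ∈ s, expLaw (t ^ x.1) (B x)) :
    P {ω | ∀ T : ℝ, 0 ≤ T → ∀ i : ℤ,
        (∑' j : {j : ℤ // i ≤ j}, jumps T (ω j.val)) < ⊤} = 1 := by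
  classical
  have htj : ∀ j : ℤ, (0:ℝ) < t ^ j := fun j => zpow_pos ht0 j
  -- single coordinate law
  have hone : ∀ (j : ℤ) (k : ℕ) (B : Set ℝ), MeasurableSet B →
      P {ω | ω j k ∈ B} = expLaw (t ^ j) B := by
    intro j k B hB
    have h := hcyl {(j, k)} (fun _ => B) (fun _ _ => hB)
    simpa using h
  -- bad sets
  set Z1 : Set (ℤ → ℕ → ℝ) := ⋃ (j : ℤ) (k : ℕ), {ω | ω j k < 0} with hZ1def
  set Z2 : Set (ℤ → ℕ → ℝ) := ⋃ (j : ℤ) (N : ℕ), {ω | ∀ k : ℕ, ω j k ≤ (N : ℝ)} with hZ2def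
  set Z3 : Set (ℤ → ℕ → ℝ) :=
    ⋃ (N : ℕ), {ω | ∀ M : ℤ, ∃ j, M ≤ j ∧ ω j 0 ≤ (N : ℝ)} with hZ3def
  have hZ1 : P Z1 = 0 := by
    refine measure_iUnion_null fun j => measure_iUnion_null fun k => ?_
    have : {ω : ℤ → ℕ → ℝ | ω j k < 0} = {ω | ω j k ∈ Set.Iio 0} := rfl
    rw [this, hone j k _ measurableSet_Iio, expLaw_Iio_zero]
  have hZ2 : P Z2 = 0 := by
    refine measure_iUnion_null fun j => measure_iUnion_null fun N => ?_
    set c : ℝ≥0∞ := expLaw (t ^ j) (Set.Iic (N : ℝ)) with hc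
    have hkey : ∀ m : ℕ, P {ω : ℤ → ℕ → ℝ | ∀ k : ℕ, ω j k ≤ (N : ℝ)} ≤ c ^ m := by
      intro m
      have hsub : {ω : ℤ → ℕ → ℝ | ∀ k : ℕ, ω j k ≤ (N : ℝ)} ⊆
          {ω | ∀ x ∈ (Finset.range m).image (fun k => ((j : ℤ), k)),
            ω x.1 x.2 ∈ (fun _ : ℤ × ℕ => Set.Iic (N : ℝ)) x} := by
        intro ω hω x hx
        simp only [Finset.mem_image, Finset.mem_range] at hx
        obtain ⟨k, -, rfl⟩ := hx
        exact hω k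
      refine (measure_mono hsub).trans_eq ?_
      rw [hcyl _ _ (fun _ _ => measurableSet_Iic)]
      rw [Finset.prod_image (by intro a _ b _ h; simpa using h)]
      simp [hc]
    have hlt : c < 1 := expLaw_Iic_lt_one (htj j) _
    have htend : Tendsto (fun m : ℕ => c ^ m) atTop (nhds 0) :=
      ENNReal.tendsto_pow_atTop_nhds_zero_of_lt_one hlt
    exact le_antisymm (ge_of_tendsto' htend hkey) (zero_le)
  have hZ3 : P Z3 = 0 := by
    refine measure_iUnion_null fun N => ?_
    set C : ℝ≥0∞ := (1 - ENNReal.ofReal t)⁻¹ with hC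
    have hCne : C ≠ ⊤ := by
      rw [hC, ENNReal.inv_ne_top]
      rw [← pos_iff_ne_zero, tsub_pos_iff_lt]
      exact ENNReal.ofReal_lt_one.mpr ht1
    have hkey : ∀ i : ℕ, P {ω : ℤ → ℕ → ℝ | ∀ M : ℤ, ∃ j, M ≤ j ∧ ω j 0 ≤ (N : ℝ)}
        ≤ ENNReal.ofReal ((N : ℝ) * t ^ (i : ℤ)) * C := by
      intro i
      have hsub : {ω : ℤ → ℕ → ℝ | ∀ M : ℤ, ∃ j, M ≤ j ∧ ω j 0 ≤ (N : ℝ)} ⊆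
          ⋃ n : ℕ, {ω : ℤ → ℕ → ℝ | ω ((i : ℤ) + n) 0 ∈ Set.Iic (N : ℝ)} := by
        intro ω hω
        obtain ⟨jj, hj1, hj2⟩ := hω (i : ℤ)
        refine Set.mem_iUnion.mpr ⟨(jj - (i : ℤ)).toNat, ?_⟩
        have heq : (i : ℤ) + ((jj - (i : ℤ)).toNat : ℤ) = jj := by omega
        show ω ((i : ℤ) + ((jj - (i : ℤ)).toNat : ℤ)) 0 ∈ Set.Iic (N : ℝ)
        rw [heq]
        exact hj2
      refine (measure_mono hsub).trans ((measure_iUnion_le _).trans ?_)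
      have hterm : ∀ n : ℕ, P {ω : ℤ → ℕ → ℝ | ω ((i : ℤ) + n) 0 ∈ Set.Iic (N : ℝ)} ≤
          ENNReal.ofReal ((N : ℝ) * t ^ (i : ℤ)) * ENNReal.ofReal t ^ n := by
        intro n
        rw [hone _ 0 _ measurableSet_Iic]
        refine (expLaw_Iic_le (htj _) (Nat.cast_nonneg N)).trans_eq ?_
        rw [zpow_add₀ (ne_of_gt ht0), zpow_natCast, zpow_natCast,
          ← ENNReal.ofReal_pow ht0.le, ← ENNReal.ofReal_mul (by positivity)]
        congr 1
        ring
      refine (ENNReal.tsum_le_tsum hterm).trans_eq ?_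
      rw [ENNReal.tsum_mul_left, ENNReal.tsum_geometric]
    have htend : Tendsto (fun i : ℕ => ENNReal.ofReal ((N : ℝ) * t ^ (i : ℤ)) * C)
        atTop (nhds 0) := by
      have h1 : Tendsto (fun i : ℕ => (N : ℝ) * t ^ (i : ℤ)) atTop (nhds 0) := by
        have := (tendsto_pow_atTop_nhds_zero_of_lt_one ht0.le ht1).const_mul (N : ℝ)
        simpa [zpow_natCast] using this
      have h2 : Tendsto (fun i : ℕ => ENNReal.ofReal ((N : ℝ) * t ^ (i : ℤ))) atTop (nhds 0) := by
        have := (ENNReal.continuous_ofReal.tendsto 0).comp h1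
        rw [ENNReal.ofReal_zero] at this
        exact this
      simpa using ENNReal.Tendsto.mul_const h2 (Or.inr hCne)
    exact le_antisymm (ge_of_tendsto' htend hkey) (zero_le)
  -- good set inclusion
  set S : Set (ℤ → ℕ → ℝ) := {ω | ∀ T : ℝ, 0 ≤ T → ∀ i : ℤ,
      (∑' j : {j : ℤ // i ≤ j}, jumps T (ω j.val)) < ⊤} with hSdef
  have hgood : ∀ ω : ℤ → ℕ → ℝ, ω ∉ Z1 ∪ Z2 ∪ Z3 → ω ∈ S := by
    intro ω hω
    simp only [Set.mem_union, not_or] at hω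
    obtain ⟨⟨hω1, hω2⟩, hω3⟩ := hω
    have h1 : ∀ j k, 0 ≤ ω j k := by
      intro j k
      by_contra h
      exact hω1 (Set.mem_iUnion.mpr ⟨j, Set.mem_iUnion.mpr ⟨k, by simpa using lt_of_not_ge h⟩⟩)
    have h2 : ∀ (j : ℤ) (N : ℕ), ∃ k, (N : ℝ) < ω j k := by
      intro j N
      by_contra h
      push_neg at h
      exact hω2 (Set.mem_iUnion.mpr ⟨j, Set.mem_iUnion.mpr ⟨N, fun k => (h k)⟩⟩)
    have h3 : ∀ N : ℕ, ∃ M : ℤ, ∀ j, M ≤ j → (N : ℝ) < ω j 0 := by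
      intro N
      by_contra h
      push_neg at h
      refine hω3 (Set.mem_iUnion.mpr ⟨N, fun M => ?_⟩)
      obtain ⟨j, hj1, hj2⟩ := h M
      exact ⟨j, hj1, hj2⟩
    intro T hT i
    set N : ℕ := ⌈T⌉₊ with hN
    have hTN : T ≤ (N : ℝ) := Nat.le_ceil T
    obtain ⟨M, hM⟩ := h3 N
    have hzero : ∀ j : ℤ, M ≤ j → jumps T (ω j) = 0 := by
      intro j hj
      refine le_antisymm ?_ (zero_le)
      have := jumps_le (T := T) (a := ω j) (m := 0) ?_
      · simpa using this
      · intro n hn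
        by_contra hcon
        have hn1 : 1 ≤ n := Nat.one_le_iff_ne_zero.mpr (by omega)
        have : ω j 0 ≤ ∑ k ∈ Finset.range n, ω j k :=
          Finset.single_le_sum (f := ω j) (fun l _ => h1 j l) (Finset.mem_range.mpr hn1)
        have := hM j hj
        linarith
    have hfinite : ∀ j : ℤ, jumps T (ω j) < ⊤ := by
      intro j
      obtain ⟨k, hk⟩ := h2 j N
      refine lt_of_le_of_lt (jumps_le (m := k) ?_) (ENNReal.natCast_lt_top k)
      intro n hn
      by_contra hcon
      have hkn : k < n := by omega
      have : ω j k ≤ ∑ l ∈ Finset.range n, ω j l :=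
        Finset.single_le_sum (f := ω j) (fun l _ => h1 j l) (Finset.mem_range.mpr hkn)
      linarith
    have hz : ∀ j : {j : ℤ // i ≤ j}, j ∉ (Finset.Icc i M).subtype (fun j => i ≤ j) →
        jumps T (ω j.val) = 0 := by
      intro j hj
      rw [Finset.mem_subtype, Finset.mem_Icc] at hj
      push_neg at hj
      exact hzero j.val (le_of_lt (hj j.prop))
    rw [tsum_eq_sum hz]
    exact ENNReal.sum_lt_top.mpr fun j _ => (hfinite j.val)
  -- conclusion
  have hcompl : Sᶜ ⊆ Z1 ∪ Z2 ∪ Z3 := fun ω hω =>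
    Classical.byContradiction fun h => hω (hgood ω h)
  have hSc : P Sᶜ = 0 :=
    measure_mono_null hcompl (by
      rw [measure_union_null_iff, measure_union_null_iff]
      exact ⟨⟨hZ1, hZ2⟩, hZ3⟩)
  have h1le : 1 ≤ P S := by
    have h := measure_union_le (μ := P) S Sᶜ
    rw [Set.union_compl_self, measure_univ, hSc, add_zero] at h
    exact h
  exact le_antisymm prob_le_one h1le
end
end

section
/- Let q be a prime power and 0 ≤ r ≤ k ≤ n integers. Then the number of n×k matrices over 𝔽_q of rank exactly r equals q^{rn + rk − r^2} · (q^{−1};q^{−1})_n · (q^{−1};q^{−1})_k / ((q^{−1};q^{−1})_r · (q^{−1};q^{−1})_{n−r} · (q^{−1};q^{−1})_{k−r}). -/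
/-!
Statement 15: the number of `n × k` matrices over `𝔽_q` of rank exactly `r`
(for `0 ≤ r ≤ k ≤ n`) equals
`q^(rn + rk − r²) · (q⁻¹;q⁻¹)_n (q⁻¹;q⁻¹)_k / ((q⁻¹;q⁻¹)_r (q⁻¹;q⁻¹)_{n−r} (q⁻¹;q⁻¹)_{k−r})`.
A prime power `q` is encoded as the cardinality of a finite field `F`.
-/

noncomputable section

/-- The `t`-Pochhammer symbol `(t;t)_n = ∏_{i=1}^n (1 - tⁱ)`. -/
def tPoch (t : ℝ) (n : ℕ) : ℝ := ∏ i ∈ Finset.range n, (1 - t ^ (i + 1))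

section AuxCounting

set_option linter.unusedSectionVars false
set_option maxHeartbeats 1000000

open Matrix LinearMap Module

variable {F : Type} [Field F] [Fintype F]

lemma aux_rank_iff_inj {n r : ℕ} (C : Matrix (Fin n) (Fin r) F) :
    C.rank = r ↔ Function.Injective C.mulVecLin := by
  rw [Matrix.rank]
  have hd : finrank F (Fin r → F) = r := by
    rw [Module.finrank_fintype_fun_eq_card, Fintype.card_fin]
  constructor
  · intro h
    rw [← LinearMap.ker_eq_bot]
    have := C.mulVecLin.finrank_range_add_finrank_ker
    rw [h, hd] at this
    rw [← Submodule.finrank_eq_zero (R := F)]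
    omega
  · intro h
    rw [LinearMap.finrank_range_of_inj h, hd]

lemma aux_rank_iff_surj {k r : ℕ} (D : Matrix (Fin r) (Fin k) F) :
    D.rank = r ↔ Function.Surjective D.mulVecLin := by
  rw [Matrix.rank, ← LinearMap.range_eq_top]
  have hd : finrank F (Fin r → F) = r := by
    rw [Module.finrank_fintype_fun_eq_card, Fintype.card_fin]
  constructor
  · intro h
    apply Submodule.eq_top_of_finrank_eq
    rw [h, hd]
  · intro h
    rw [h, finrank_top, hd]

lemma aux_cancel {n r k : ℕ} {C : Matrix (Fin n) (Fin r) F}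
    (hC : Function.Injective C.mulVecLin) {X Y : Matrix (Fin r) (Fin k) F}
    (h : C * X = C * Y) : X = Y := by
  have h2 : C.mulVecLin ∘ₗ X.mulVecLin = C.mulVecLin ∘ₗ Y.mulVecLin := by
    rw [← Matrix.mulVecLin_mul, ← Matrix.mulVecLin_mul, h]
  apply Matrix.toLin'.injective
  rw [Matrix.toLin'_apply', Matrix.toLin'_apply']
  exact LinearMap.ext fun v => hC (LinearMap.ext_iff.mp h2 v)

lemma aux_unit_id {r : ℕ} (u v : (Matrix (Fin r) (Fin r) F)ˣ) (huv : u * v = 1) :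
    Matrix.mulVecLin (u : Matrix (Fin r) (Fin r) F) ∘ₗ
      Matrix.mulVecLin (v : Matrix (Fin r) (Fin r) F) = LinearMap.id := by
  rw [← Matrix.mulVecLin_mul, ← Units.val_mul, huv, Units.val_one, Matrix.mulVecLin_one]

lemma aux_unit_inj {r : ℕ} (u : (Matrix (Fin r) (Fin r) F)ˣ) :
    Function.Injective (Matrix.mulVecLin (u : Matrix (Fin r) (Fin r) F)) := by
  intro x y hxy
  have := congrArg (Matrix.mulVecLin (↑u⁻¹ : Matrix (Fin r) (Fin r) F)) hxy
  rw [← LinearMap.comp_apply, ← LinearMap.comp_apply, aux_unit_id u⁻¹ u (by simp)] at this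
  simpa using this

lemma aux_unit_surj {r : ℕ} (u : (Matrix (Fin r) (Fin r) F)ˣ) :
    Function.Surjective (Matrix.mulVecLin (u : Matrix (Fin r) (Fin r) F)) := by
  intro y
  refine ⟨Matrix.mulVecLin (↑u⁻¹ : Matrix (Fin r) (Fin r) F) y, ?_⟩
  have h := LinearMap.ext_iff.mp (aux_unit_id u u⁻¹ (by simp)) y
  simpa using h

lemma aux_factor {n k r : ℕ} (B : Matrix (Fin n) (Fin k) F) (hB : B.rank = r) :
    ∃ (C : Matrix (Fin n) (Fin r) F) (D : Matrix (Fin r) (Fin k) F),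
      Function.Injective C.mulVecLin ∧ Function.Surjective D.mulVecLin ∧ C * D = B := by
  classical
  set W := LinearMap.range B.mulVecLin with hW
  have hfr : finrank F W = r := hB
  let b : Basis (Fin r) F W := finBasisOfFinrankEq F W hfr
  refine ⟨LinearMap.toMatrix' (W.subtype ∘ₗ (b.equivFun.symm : (Fin r → F) →ₗ[F] W)),
    LinearMap.toMatrix' ((b.equivFun : W →ₗ[F] (Fin r → F)) ∘ₗ B.mulVecLin.rangeRestrict),
    ?_, ?_, ?_⟩
  · rw [← Matrix.toLin'_apply', Matrix.toLin'_toMatrix']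
    exact W.injective_subtype.comp b.equivFun.symm.injective
  · rw [← Matrix.toLin'_apply', Matrix.toLin'_toMatrix']
    exact b.equivFun.surjective.comp B.mulVecLin.surjective_rangeRestrict
  · apply Matrix.toLin'.injective
    rw [Matrix.toLin'_mul, Matrix.toLin'_toMatrix', Matrix.toLin'_toMatrix']
    ext x i
    simp only [LinearMap.comp_apply, LinearEquiv.coe_coe, Basis.equivFun_symm_apply,
      Submodule.coe_subtype, Matrix.toLin'_apply', Matrix.mulVecLin_apply]
    -- goal should now be about sums
    have h1 := b.sum_repr (B.mulVecLin.rangeRestrict (Pi.single x 1))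
    have h2 : ((∑ l : Fin r, (b.repr (B.mulVecLin.rangeRestrict (Pi.single x 1))) l • b l : W)
        : Fin n → F) i = ((B.mulVecLin.rangeRestrict (Pi.single x 1) : W) : Fin n → F) i := by
      rw [h1]
    simp only [Submodule.coe_sum, Submodule.coe_smul] at h2
    simp only [Finset.sum_apply, Pi.smul_apply, smul_eq_mul] at h2
    rw [Basis.equivFun_apply] at *
    convert h2 using 2
    simp [Matrix.mulVec_single, Matrix.mulVecLin_apply]
    · rw [h2]; simp [Matrix.mulVec_single, Matrix.mulVecLin_apply, LinearMap.single_apply]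
    · simp [Matrix.mulVec_single, Matrix.mulVecLin_apply, LinearMap.single_apply]

-- rank of product with full rank factors
lemma aux_rank_mul {n k r : ℕ} (C : Matrix (Fin n) (Fin r) F) (D : Matrix (Fin r) (Fin k) F)
    (hC : Function.Injective C.mulVecLin) (hD : Function.Surjective D.mulVecLin) :
    (C * D).rank = r := by
  rw [Matrix.rank, Matrix.mulVecLin_mul,
    LinearMap.range_comp_of_range_eq_top _ (LinearMap.range_eq_top.mpr hD)]
  exact (aux_rank_iff_inj C).mpr hC

lemma aux_range_mul {n k r : ℕ} (C : Matrix (Fin n) (Fin r) F) (D : Matrix (Fin r) (Fin k) F)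
    (hD : Function.Surjective D.mulVecLin) :
    LinearMap.range (C * D).mulVecLin = LinearMap.range C.mulVecLin := by
  rw [Matrix.mulVecLin_mul,
    LinearMap.range_comp_of_range_eq_top _ (LinearMap.range_eq_top.mpr hD)]

-- the key "same column space" lemma
lemma aux_colspace {n r : ℕ} (C C₀ : Matrix (Fin n) (Fin r) F)
    (hrange : LinearMap.range C.mulVecLin = LinearMap.range C₀.mulVecLin)
    {L : (Fin n → F) →ₗ[F] (Fin r → F)} (hL : L ∘ₗ C₀.mulVecLin = LinearMap.id) :
    C₀ * LinearMap.toMatrix' (L ∘ₗ C.mulVecLin) = C := by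
  have key : ∀ v, (C₀.mulVecLin ∘ₗ (L ∘ₗ C.mulVecLin)) v = C.mulVecLin v := by
    intro v
    have hm : C.mulVecLin v ∈ LinearMap.range C₀.mulVecLin := by
      rw [← hrange]; exact ⟨v, rfl⟩
    obtain ⟨w, hw⟩ := hm
    simp only [LinearMap.comp_apply, ← hw]
    rw [← LinearMap.comp_apply L, hL, LinearMap.id_apply]
  apply Matrix.toLin'.injective
  rw [Matrix.toLin'_mul, Matrix.toLin'_toMatrix', Matrix.toLin'_apply', Matrix.toLin'_apply']
  exact LinearMap.ext key

lemma aux_key (n k r : ℕ) :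
    Nat.card ({B : Matrix (Fin n) (Fin k) F // B.rank = r} × (Matrix (Fin r) (Fin r) F)ˣ) =
    Nat.card ({C : Matrix (Fin n) (Fin r) F // C.rank = r} ×
      {D : Matrix (Fin r) (Fin k) F // D.rank = r}) := by
  classical
  choose C₀ D₀ hinj hsurj hfac using fun (B : {B : Matrix (Fin n) (Fin k) F // B.rank = r}) =>
    aux_factor B.1 B.2
  apply Nat.card_eq_of_bijective
    (fun p => (⟨C₀ p.1 * (p.2 : Matrix (Fin r) (Fin r) F), by
        rw [aux_rank_iff_inj, Matrix.mulVecLin_mul]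
        exact (hinj p.1).comp (aux_unit_inj p.2)⟩,
      ⟨((p.2⁻¹ : (Matrix (Fin r) (Fin r) F)ˣ) : Matrix (Fin r) (Fin r) F) * D₀ p.1, by
        rw [aux_rank_iff_surj, Matrix.mulVecLin_mul]
        exact (aux_unit_surj p.2⁻¹).comp (hsurj p.1)⟩))
  have recomb : ∀ (B : {B : Matrix (Fin n) (Fin k) F // B.rank = r})
      (g : (Matrix (Fin r) (Fin r) F)ˣ),
      (C₀ B * (g : Matrix (Fin r) (Fin r) F)) *
        (((g⁻¹ : (Matrix (Fin r) (Fin r) F)ˣ) : Matrix (Fin r) (Fin r) F) * D₀ B) = B.1 := by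
    intro B g
    rw [Matrix.mul_assoc, ← Matrix.mul_assoc (g : Matrix (Fin r) (Fin r) F), Units.mul_inv,
      Matrix.one_mul, hfac B]
  constructor
  · rintro ⟨B₁, g₁⟩ ⟨B₂, g₂⟩ hp
    have h1' : C₀ B₁ * (g₁ : Matrix (Fin r) (Fin r) F)
        = C₀ B₂ * (g₂ : Matrix (Fin r) (Fin r) F) :=
      congrArg (fun z => (z.1.1 : Matrix (Fin n) (Fin r) F)) hp
    have h2' : ((g₁⁻¹ : (Matrix (Fin r) (Fin r) F)ˣ) : Matrix (Fin r) (Fin r) F) * D₀ B₁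
        = ((g₂⁻¹ : (Matrix (Fin r) (Fin r) F)ˣ) : Matrix (Fin r) (Fin r) F) * D₀ B₂ :=
      congrArg (fun z => (z.2.1 : Matrix (Fin r) (Fin k) F)) hp
    have hBeq : B₁ = B₂ := by
      apply Subtype.ext
      rw [← recomb B₁ g₁, ← recomb B₂ g₂, h1', h2']
    subst hBeq
    have : (g₁ : Matrix (Fin r) (Fin r) F) = g₂ := aux_cancel (hinj B₁) h1'
    exact Prod.ext rfl (Units.ext this)
  · rintro ⟨⟨C, hC⟩, ⟨D, hD⟩⟩
    have hCinj := (aux_rank_iff_inj C).mp hC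
    have hDsurj := (aux_rank_iff_surj D).mp hD
    set B : {B : Matrix (Fin n) (Fin k) F // B.rank = r} :=
      ⟨C * D, aux_rank_mul C D hCinj hDsurj⟩ with hBdef
    have hrange : LinearMap.range C.mulVecLin = LinearMap.range (C₀ B).mulVecLin := by
      rw [← aux_range_mul (C₀ B) (D₀ B) (hsurj B), hfac B]
      exact (aux_range_mul C D hDsurj).symm
    obtain ⟨L, hL⟩ := (C₀ B).mulVecLin.exists_leftInverse_of_injective
      (LinearMap.ker_eq_bot.mpr (hinj B))
    obtain ⟨L', hL'⟩ := C.mulVecLin.exists_leftInverse_of_injective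
      (LinearMap.ker_eq_bot.mpr hCinj)
    set G : Matrix (Fin r) (Fin r) F := LinearMap.toMatrix' (L ∘ₗ C.mulVecLin) with hG
    set G' : Matrix (Fin r) (Fin r) F := LinearMap.toMatrix' (L' ∘ₗ (C₀ B).mulVecLin) with hG'
    have key1 : C₀ B * G = C := aux_colspace C (C₀ B) hrange hL
    have key2 : C * G' = C₀ B := aux_colspace (C₀ B) C hrange.symm hL'
    have hGG' : G * G' = 1 := by
      apply aux_cancel (hinj B)
      rw [← Matrix.mul_assoc, key1, key2, Matrix.mul_one]
    have hG'G : G' * G = 1 := by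
      apply aux_cancel hCinj
      rw [← Matrix.mul_assoc, key2, key1, Matrix.mul_one]
    refine ⟨(B, ⟨G, G', hGG', hG'G⟩), ?_⟩
    have hD0 : G * D = D₀ B := by
      apply aux_cancel (hinj B)
      rw [← Matrix.mul_assoc, key1, hfac B]
    refine Prod.ext (Subtype.ext ?_) (Subtype.ext ?_)
    · exact key1
    · show (G' : Matrix (Fin r) (Fin r) F) * D₀ B = D
      rw [← hD0, ← Matrix.mul_assoc, hG'G, Matrix.one_mul]

end AuxCounting

section AuxCards
set_option linter.unusedSectionVars false
open Matrix LinearMap Module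
variable {F : Type} [Field F] [Fintype F]

lemma aux_card_full {m r : ℕ} (h : r ≤ m) :
    Nat.card {C : Matrix (Fin m) (Fin r) F // C.rank = r} =
      ∏ i : Fin r, (Fintype.card F ^ m - Fintype.card F ^ (i : ℕ)) := by
  have e0 : {C : Matrix (Fin m) (Fin r) F // C.rank = r} ≃
      {s : Fin r → (Fin m → F) // LinearIndependent F s} := by
    refine Equiv.subtypeEquiv (Equiv.mk (fun C => Cᵀ) (fun s => (Matrix.of s)ᵀ)
      (fun C => rfl) (fun s => rfl)) (fun C => ?_)
    rw [Matrix.rank_eq_finrank_span_cols]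
    rw [linearIndependent_iff_card_eq_finrank_span]
    rw [Fintype.card_fin, Set.finrank]
    exact eq_comm
  rw [Nat.card_congr e0]
  have hfr : finrank F (Fin m → F) = m := by
    rw [Module.finrank_fintype_fun_eq_card, Fintype.card_fin]
  rw [card_linearIndependent (K := F) (V := Fin m → F) (by rw [hfr]; exact h)]
  rw [hfr]

lemma aux_card_full_row {k r : ℕ} (h : r ≤ k) :
    Nat.card {D : Matrix (Fin r) (Fin k) F // D.rank = r} =
      ∏ i : Fin r, (Fintype.card F ^ k - Fintype.card F ^ (i : ℕ)) := by
  have e0 : {D : Matrix (Fin r) (Fin k) F // D.rank = r} ≃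
      {C : Matrix (Fin k) (Fin r) F // C.rank = r} :=
    Equiv.subtypeEquiv (Equiv.mk (fun D => Dᵀ) (fun C => Cᵀ)
      (fun D => rfl) (fun C => rfl)) (fun D => by
        show D.rank = r ↔ (Dᵀ).rank = r
        rw [Matrix.rank_transpose])
  rw [Nat.card_congr e0, aux_card_full h]

lemma aux_card_units (r : ℕ) :
    Nat.card (Matrix (Fin r) (Fin r) F)ˣ =
      ∏ i : Fin r, (Fintype.card F ^ r - Fintype.card F ^ (i : ℕ)) :=
  Matrix.card_GL_field r

end AuxCards

lemma tPoch_pos {q : ℕ} (hq : 1 < q) (m : ℕ) : 0 < tPoch (q : ℝ)⁻¹ m := by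
  apply Finset.prod_pos
  intro i _
  have h1 : ((q : ℝ))⁻¹ < 1 := by
    rw [inv_lt_one_iff₀]; right; exact_mod_cast hq
  have h0 : (0:ℝ) ≤ (q : ℝ)⁻¹ := by positivity
  have := pow_lt_one₀ h0 h1 (by omega : i+1 ≠ 0)
  linarith

lemma prodA {q : ℕ} (hq : 1 < q) {r m : ℕ} (h : r ≤ m) :
    (∏ i ∈ Finset.range r, ((q:ℝ)^m - (q:ℝ)^i)) * tPoch (q : ℝ)⁻¹ (m - r) =
      (q:ℝ)^(r*m) * tPoch (q : ℝ)⁻¹ m := by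
  have hq0 : (q:ℝ) ≠ 0 := by positivity
  have step1 : ∀ i ∈ Finset.range r, (q:ℝ)^m - (q:ℝ)^i
      = (q:ℝ)^m * (1 - ((q:ℝ)⁻¹)^(m - i)) := by
    intro i hi
    have hi' : i ≤ m := le_trans (Nat.le_of_lt (Finset.mem_range.mp hi)) h
    have : (q:ℝ)^m * ((q:ℝ)⁻¹)^(m - i) = (q:ℝ)^i := by
      rw [inv_pow, mul_inv_eq_iff_eq_mul₀ (by positivity), ← pow_add]
      congr 1
      omega
    rw [mul_sub, mul_one, this]
  rw [Finset.prod_congr rfl step1, Finset.prod_mul_distrib, Finset.prod_const, Finset.card_range,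
    ← pow_mul, mul_comm m r]
  have step2 : ∏ i ∈ Finset.range r, (1 - ((q:ℝ)⁻¹)^(m - i))
      = ∏ j ∈ Finset.range r, (1 - ((q:ℝ)⁻¹)^((m - r) + j + 1)) := by
    rw [← Finset.prod_range_reflect]
    apply Finset.prod_congr rfl
    intro j hj
    have := Finset.mem_range.mp hj
    congr 2
    omega
  rw [step2]
  have step3 : tPoch (q : ℝ)⁻¹ m = tPoch (q : ℝ)⁻¹ (m - r) *
      ∏ j ∈ Finset.range r, (1 - ((q:ℝ)⁻¹)^((m - r) + j + 1)) := by
    have hm : m = (m - r) + r := by omega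
    conv_lhs => rw [tPoch, hm, Finset.prod_range_add]
    rw [tPoch]
  rw [step3]
  ring

lemma castA {q r m : ℕ} (hq : 1 < q) (h : r ≤ m) :
    ((∏ i : Fin r, (q^m - q^(i:ℕ)) : ℕ) : ℝ) = ∏ i ∈ Finset.range r, ((q:ℝ)^m - (q:ℝ)^i) := by
  rw [Nat.cast_prod, Fin.prod_univ_eq_prod_range fun i => ((q^m - q^i : ℕ) : ℝ)]
  apply Finset.prod_congr rfl
  intro i hi
  have : q^i ≤ q^m := Nat.pow_le_pow_right (le_of_lt hq)
    (le_trans (Nat.le_of_lt (Finset.mem_range.mp hi)) h)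
  push_cast [Nat.cast_sub this]
  ring

theorem statement15 (F : Type) [Field F] [Fintype F] (q : ℕ) (hq : q = Fintype.card F)
    (n k r : ℕ) (hrk : r ≤ k) (hkn : k ≤ n) :
    (Nat.card {B : Matrix (Fin n) (Fin k) F // B.rank = r} : ℝ) =
      (q : ℝ) ^ (r * n + r * k - r ^ 2) *
        (tPoch (q : ℝ)⁻¹ n * tPoch (q : ℝ)⁻¹ k) /
        (tPoch (q : ℝ)⁻¹ r * tPoch (q : ℝ)⁻¹ (n - r) * tPoch (q : ℝ)⁻¹ (k - r)) := by
  have hrn : r ≤ n := le_trans hrk hkn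
  have hq2 : 1 < q := hq ▸ Fintype.one_lt_card
  have hq0 : (q:ℝ) ≠ 0 := by positivity
  -- natural number identity
  have hNat : Nat.card {B : Matrix (Fin n) (Fin k) F // B.rank = r} *
      ∏ i : Fin r, (q^r - q^(i:ℕ)) =
      (∏ i : Fin r, (q^n - q^(i:ℕ))) * ∏ i : Fin r, (q^k - q^(i:ℕ)) := by
    subst hq
    rw [← aux_card_units (F := F) r, ← aux_card_full (F := F) hrn, ← aux_card_full_row (F := F) hrk,
      ← Nat.card_prod, ← Nat.card_prod]
    exact aux_key (F := F) n k r
  set N : ℝ := (Nat.card {B : Matrix (Fin n) (Fin k) F // B.rank = r} : ℝ) with hNdef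
  set Pn := tPoch (q : ℝ)⁻¹ n
  set Pk := tPoch (q : ℝ)⁻¹ k
  set Pr' := tPoch (q : ℝ)⁻¹ r
  set Pnr := tPoch (q : ℝ)⁻¹ (n - r)
  set Pkr := tPoch (q : ℝ)⁻¹ (k - r)
  have hPrne : Pr' ≠ 0 := ne_of_gt (tPoch_pos hq2 r)
  have hPnrne : Pnr ≠ 0 := ne_of_gt (tPoch_pos hq2 (n - r))
  have hPkrne : Pkr ≠ 0 := ne_of_gt (tPoch_pos hq2 (k - r))
  have hA : N * (∏ i ∈ Finset.range r, ((q:ℝ)^r - (q:ℝ)^i)) =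
      (∏ i ∈ Finset.range r, ((q:ℝ)^n - (q:ℝ)^i)) *
      (∏ i ∈ Finset.range r, ((q:ℝ)^k - (q:ℝ)^i)) := by
    rw [hNdef, ← castA hq2 (le_refl r), ← castA hq2 hrn, ← castA hq2 hrk]
    exact_mod_cast congrArg (Nat.cast : ℕ → ℝ) hNat
  have h1 := prodA hq2 hrn
  have h2 := prodA hq2 hrk
  have h3 := prodA hq2 (le_refl r)
  rw [Nat.sub_self, show tPoch (q:ℝ)⁻¹ 0 = 1 from Finset.prod_range_zero _, mul_one] at h3
  have he : (q:ℝ)^(r*n + r*k - r^2) * (q:ℝ)^(r*r) = (q:ℝ)^(r*n) * (q:ℝ)^(r*k) := by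
    rw [← pow_add, ← pow_add]
    congr 1
    have : r * r ≤ r * k := Nat.mul_le_mul_left r hrk
    have hsq : r^2 = r*r := sq r
    omega
  rw [eq_div_iff (by exact mul_ne_zero (mul_ne_zero hPrne hPnrne) hPkrne)]
  apply mul_right_cancel₀ (pow_ne_zero (r*r) hq0)
  linear_combination (Pnr*Pkr)*hA + ((∏ i ∈ Finset.range r, ((q:ℝ)^k - (q:ℝ)^i))*Pkr)*h1 +
    ((q:ℝ)^(r*n)*Pn)*h2 + (-(N*Pnr*Pkr))*h3 + (-(Pn*Pk))*he
end
end

section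
/- Let q be a prime power and N, D positive integers. (1) If A is the top-left N×N submatrix of a uniformly random element of GL_{N+D}(𝔽_q), then E[q^{corank(A)}] = (1 − q^{−D} + 1 − q^{−N})/(1 − q^{−N−D}); equivalently, E[#ker(A)] equals this value, since #ker(A) = q^{corank(A)}. (2) If instead A is uniformly distributed on Mat_N(𝔽_q), then E[q^{corank(A)}] = 2 − q^{−N}. -/
/-!
Statement 17: (1) if `A` is the top-left `N × N` submatrix of a uniformly random element
of `GL_{N+D}(𝔽_q)`, then `E[q^{corank A}] = (1 - q^{-D} + 1 - q^{-N})/(1 - q^{-N-D})`;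
(2) if `A` is uniform on `Mat_N(𝔽_q)`, then `E[q^{corank A}] = 2 - q^{-N}`.
Expectations over uniform measures on finite sets are written as averages, and a prime
power `q` is encoded as the cardinality of a finite field `F`.
-/

noncomputable section

set_option linter.unusedSectionVars false

open Matrix Finset

namespace Statement17Aux

variable {F : Type} [Field F] [Fintype F] [DecidableEq F]

lemma card_ker (n : ℕ) (M : Matrix (Fin n) (Fin n) F) :
    Fintype.card {v : Fin n → F // M.mulVec v = 0} = Fintype.card F ^ (n - M.rank) := by
  have e : {v : Fin n → F // M.mulVec v = 0} ≃ LinearMap.ker M.mulVecLin :=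
    Equiv.subtypeEquivRight (fun v => by simp [LinearMap.mem_ker])
  haveI : Fintype ↥(LinearMap.ker M.mulVecLin) := Fintype.ofFinite _
  rw [Fintype.card_congr e]
  have h1 : Fintype.card (LinearMap.ker M.mulVecLin) =
      Fintype.card F ^ Module.finrank F (LinearMap.ker M.mulVecLin) := Module.card_eq_pow_finrank
  have h2 := LinearMap.finrank_range_add_finrank_ker M.mulVecLin
  rw [Module.finrank_fintype_fun_eq_card, Fintype.card_fin] at h2
  rw [h1]
  congr 1
  have h3 : M.rank = Module.finrank F (LinearMap.range M.mulVecLin) := rfl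
  omega

lemma sum_card_swap {α β : Type*} [Fintype α] [Fintype β] (p : α → β → Prop)
    [∀ a b, Decidable (p a b)] :
    ∑ a : α, Fintype.card {b // p a b} = ∑ b : β, Fintype.card {a // p a b} := by
  simp only [Fintype.card_subtype, Finset.card_filter]
  exact Finset.sum_comm

lemma card_dot_ker (n : ℕ) (v : Fin n → F) (hv : v ≠ 0) :
    Fintype.card {w : Fin n → F // w ⬝ᵥ v = 0} = Fintype.card F ^ (n - 1) := by
  let φ : (Fin n → F) →ₗ[F] F :=
    { toFun := fun w => w ⬝ᵥ v
      map_add' := fun a b => add_dotProduct a b v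
      map_smul' := fun c a => smul_dotProduct c a v }
  have hsurj : Function.Surjective φ := by
    obtain ⟨i, hi⟩ : ∃ i, v i ≠ 0 := by
      by_contra h; push_neg at h; exact hv (funext h)
    intro c
    refine ⟨Pi.single i ((v i)⁻¹ * c), ?_⟩
    show Pi.single i ((v i)⁻¹ * c) ⬝ᵥ v = c
    rw [single_dotProduct]
    field_simp
  have e : {w : Fin n → F // w ⬝ᵥ v = 0} ≃ LinearMap.ker φ :=
    Equiv.subtypeEquivRight (fun w => by simp [φ, LinearMap.mem_ker])
  haveI : Fintype ↥(LinearMap.ker φ) := Fintype.ofFinite _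
  rw [Fintype.card_congr e, Module.card_eq_pow_finrank (K := F)]
  congr 1
  have h2 := LinearMap.finrank_range_add_finrank_ker φ
  rw [Module.finrank_fintype_fun_eq_card, Fintype.card_fin] at h2
  have h3 : Module.finrank F ↥(LinearMap.range φ) = 1 := by
    rw [LinearMap.range_eq_top.2 hsurj, finrank_top, Module.finrank_self]
  omega

lemma card_matrix_ann (n : ℕ) (v : Fin n → F) (hv : v ≠ 0) :
    Fintype.card {M : Matrix (Fin n) (Fin n) F // M.mulVec v = 0} =
      (Fintype.card F ^ (n - 1)) ^ n := by
  have e : {M : Matrix (Fin n) (Fin n) F // M.mulVec v = 0} ≃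
      (Fin n → {w : Fin n → F // w ⬝ᵥ v = 0}) :=
    { toFun := fun M i => ⟨M.1 i, congrFun M.2 i⟩
      invFun := fun f => ⟨Matrix.of (fun i => (f i).1), funext fun i => (f i).2⟩
      left_inv := fun M => rfl
      right_inv := fun f => rfl }
  rw [Fintype.card_congr e, Fintype.card_fun, card_dot_ker n v hv, Fintype.card_fin]

lemma exists_unit_mulVec {n : ℕ} (u w : Fin n → F) (hu : u ≠ 0) (hw : w ≠ 0) :
    ∃ g : (Matrix (Fin n) (Fin n) F)ˣ, (g : Matrix (Fin n) (Fin n) F).mulVec u = w := by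
  classical
  have hiu : LinearIndepOn F id ({u} : Set (Fin n → F)) := LinearIndepOn.singleton hu
  have hiw : LinearIndepOn F id ({w} : Set (Fin n → F)) := LinearIndepOn.singleton hw
  let bu := Module.Basis.extend hiu
  let bw := Module.Basis.extend hiw
  haveI : Fintype ↥(hiu.extend (Set.subset_univ _)) := (Set.toFinite _).fintype
  haveI : Fintype ↥(hiw.extend (Set.subset_univ _)) := (Set.toFinite _).fintype
  have hcard : Fintype.card ↥(hiu.extend (Set.subset_univ _)) =
      Fintype.card ↥(hiw.extend (Set.subset_univ _)) := by
    rw [← Module.finrank_eq_card_basis bu, ← Module.finrank_eq_card_basis bw]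
  have hmu : u ∈ hiu.extend (Set.subset_univ _) := hiu.subset_extend _ rfl
  have hmw : w ∈ hiw.extend (Set.subset_univ _) := hiw.subset_extend _ rfl
  let f0 := Fintype.equivOfCardEq hcard
  let f := f0.trans (Equiv.swap (f0 ⟨u, hmu⟩) ⟨w, hmw⟩)
  let e := bu.equiv bw f
  have hid1 : (e : (Fin n → F) →ₗ[F] (Fin n → F)) ∘ₗ (e.symm : (Fin n → F) →ₗ[F] (Fin n → F))
      = LinearMap.id := by ext x; simp
  have hid2 : (e.symm : (Fin n → F) →ₗ[F] (Fin n → F)) ∘ₗ (e : (Fin n → F) →ₗ[F] (Fin n → F))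
      = LinearMap.id := by ext x; simp
  refine ⟨⟨LinearMap.toMatrix' (e : (Fin n → F) →ₗ[F] (Fin n → F)),
    LinearMap.toMatrix' (e.symm : (Fin n → F) →ₗ[F] (Fin n → F)), ?_, ?_⟩, ?_⟩
  · rw [← LinearMap.toMatrix'_comp, hid1, LinearMap.toMatrix'_id]
  · rw [← LinearMap.toMatrix'_comp, hid2, LinearMap.toMatrix'_id]
  · show (LinearMap.toMatrix' (e : (Fin n → F) →ₗ[F] (Fin n → F))).mulVec u = w
    rw [← Matrix.toLin'_apply, Matrix.toLin'_toMatrix']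
    show e u = w
    calc e u = e (bu ⟨u, hmu⟩) := by rw [Module.Basis.extend_apply_self]
    _ = bw (f ⟨u, hmu⟩) := bu.equiv_apply _ _ _
    _ = bw ⟨w, hmw⟩ := by
          simp only [f, Equiv.trans_apply, Equiv.swap_apply_left]
    _ = w := Module.Basis.extend_apply_self _ _

lemma mulVec_unit_ne_zero {n : ℕ} (g : (Matrix (Fin n) (Fin n) F)ˣ) (v : Fin n → F)
    (hv : v ≠ 0) : (g : Matrix (Fin n) (Fin n) F).mulVec v ≠ 0 := by
  intro h
  apply hv
  calc v = ((↑(g⁻¹ * g) : Matrix (Fin n) (Fin n) F)).mulVec v := by simp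
  _ = ((g⁻¹ : (Matrix (Fin n) (Fin n) F)ˣ) : Matrix (Fin n) (Fin n) F).mulVec
        ((g : Matrix (Fin n) (Fin n) F).mulVec v) := by
      rw [Units.val_mul, ← Matrix.mulVec_mulVec]
  _ = 0 := by rw [h, Matrix.mulVec_zero]

lemma card_fiber_eq {n : ℕ} (v₁ u₁ v₂ u₂ : Fin n → F) (hv₁ : v₁ ≠ 0) (hu₁ : u₁ ≠ 0)
    (hv₂ : v₂ ≠ 0) (hu₂ : u₂ ≠ 0) :
    Fintype.card {g : (Matrix (Fin n) (Fin n) F)ˣ //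
        (g : Matrix (Fin n) (Fin n) F).mulVec v₁ = u₁} =
    Fintype.card {g : (Matrix (Fin n) (Fin n) F)ˣ //
        (g : Matrix (Fin n) (Fin n) F).mulVec v₂ = u₂} := by
  obtain ⟨h, hh⟩ := exists_unit_mulVec v₂ v₁ hv₂ hv₁
  obtain ⟨k, hk⟩ := exists_unit_mulVec u₁ u₂ hu₁ hu₂
  have hhinv : ((h⁻¹ : (Matrix (Fin n) (Fin n) F)ˣ) : Matrix (Fin n) (Fin n) F).mulVec v₁ = v₂ := by
    rw [← hh, Matrix.mulVec_mulVec, ← Units.val_mul, inv_mul_cancel]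
    simp
  have hkinv : ((k⁻¹ : (Matrix (Fin n) (Fin n) F)ˣ) : Matrix (Fin n) (Fin n) F).mulVec u₂ = u₁ := by
    rw [← hk, Matrix.mulVec_mulVec, ← Units.val_mul, inv_mul_cancel]
    simp
  apply Fintype.card_congr
  refine
    { toFun := fun g => ⟨k * g.1 * h, ?_⟩
      invFun := fun g => ⟨k⁻¹ * g.1 * h⁻¹, ?_⟩
      left_inv := fun g => ?_
      right_inv := fun g => ?_ }
  · simp only [Units.val_mul, ← Matrix.mulVec_mulVec, hh, g.2, hk]
  · simp only [Units.val_mul, ← Matrix.mulVec_mulVec, hhinv, g.2, hkinv]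
  · apply Subtype.ext; simp only; group
  · apply Subtype.ext; simp only; group

lemma card_pred_mulVec {n : ℕ} (P : (Fin n → F) → Prop) [DecidablePred P]
    (v e : Fin n → F) (hv : v ≠ 0) (he : e ≠ 0) :
    Fintype.card {g : (Matrix (Fin n) (Fin n) F)ˣ //
        P ((g : Matrix (Fin n) (Fin n) F).mulVec v)} =
      (Finset.univ.filter (fun u : Fin n → F => P u ∧ u ≠ 0)).card *
      Fintype.card {g : (Matrix (Fin n) (Fin n) F)ˣ //
        (g : Matrix (Fin n) (Fin n) F).mulVec e = e} := by
  classical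
  set G := (Matrix (Fin n) (Fin n) F)ˣ
  set f : G → (Fin n → F) := fun g => (g : Matrix (Fin n) (Fin n) F).mulVec v with hf
  rw [Fintype.card_subtype]
  rw [Finset.card_eq_sum_card_fiberwise
    (f := f) (t := Finset.univ.filter (fun u : Fin n → F => P u ∧ u ≠ 0))
    (fun g hg => by
      simp only [Finset.mem_coe, Finset.mem_filter, Finset.mem_univ, true_and] at hg ⊢
      exact ⟨hg, mulVec_unit_ne_zero g v hv⟩)]
  rw [Finset.sum_congr rfl (fun u hu => ?_), Finset.sum_const, smul_eq_mul]
  simp only [Finset.mem_filter, Finset.mem_univ, true_and] at hu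
  have h1 : (Finset.univ.filter (fun g : G => P (f g))).filter (fun g => f g = u) =
      Finset.univ.filter (fun g : G => f g = u) := by
    ext g
    simp only [Finset.mem_filter, Finset.mem_univ, true_and, and_iff_right_iff_imp]
    intro h; rw [h]; exact hu.1
  rw [h1, ← Fintype.card_subtype]
  exact card_fiber_eq v u e e hv hu.2 he he

lemma card_Z (N D : ℕ) (h : N ≤ N + D) :
    Fintype.card {u : Fin (N + D) → F // ∀ i : Fin N, u (Fin.castLE h i) = 0}
      = Fintype.card F ^ D := by
  have hc : ∀ i : Fin N, Fin.castLE h i = Fin.castAdd D i := fun i => rfl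
  have e : {u : Fin (N + D) → F // ∀ i : Fin N, u (Fin.castLE h i) = 0} ≃ (Fin D → F) :=
    { toFun := fun u j => u.1 (Fin.natAdd N j)
      invFun := fun w => ⟨Fin.append (0 : Fin N → F) w, fun i => by rw [hc]; exact Fin.append_left _ w i⟩
      left_inv := fun u => by
        apply Subtype.ext
        funext x
        dsimp only
        refine Fin.addCases (fun i => ?_) (fun j => ?_) x
        · rw [Fin.append_left, ← hc, u.2 i]; rfl
        · rw [Fin.append_right]
      right_inv := fun w => by funext j; simp [Fin.append_right] }
  rw [Fintype.card_congr e, Fintype.card_fun, Fintype.card_fin]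

lemma submatrix_mulVec_eq {N D : ℕ} (h : N ≤ N + D) (g : Matrix (Fin (N+D)) (Fin (N+D)) F)
    (v : Fin N → F) :
    (g.submatrix (Fin.castLE h) (Fin.castLE h)).mulVec v = 0 ↔
      ∀ i : Fin N, g.mulVec (Fin.append v 0) (Fin.castLE h i) = 0 := by
  have hc : ∀ i : Fin N, Fin.castLE h i = Fin.castAdd D i := fun i => rfl
  rw [funext_iff]
  apply forall_congr'
  intro i
  have key : (g.submatrix (Fin.castLE h) (Fin.castLE h)).mulVec v i =
      g.mulVec (Fin.append v 0) (Fin.castLE h i) := by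
    show (fun j => g.submatrix (Fin.castLE h) (Fin.castLE h) i j) ⬝ᵥ v =
      (fun j => g (Fin.castLE h i) j) ⬝ᵥ (Fin.append v 0)
    simp only [Matrix.submatrix_apply, dotProduct]
    rw [Fin.sum_univ_add]
    simp only [hc, Fin.append_left, Fin.append_right, Pi.zero_apply, mul_zero,
      Finset.sum_const_zero, add_zero]
  rw [key]
  simp

lemma append_ne_zero {N D : ℕ} (v : Fin N → F) (hv : v ≠ 0) :
    (Fin.append v (0 : Fin D → F)) ≠ 0 := by
  intro h
  apply hv
  funext i
  have := congrFun h (Fin.castAdd D i)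
  rwa [Fin.append_left] at this

end Statement17Aux

open Statement17Aux

set_option maxHeartbeats 1000000 in
theorem statement17 (F : Type) [Field F] [Fintype F] [DecidableEq F]
    (q : ℕ) (hq : q = Fintype.card F) (N D : ℕ) (hN : 1 ≤ N) (hD : 1 ≤ D) :
    ((∑ g : (Matrix (Fin (N + D)) (Fin (N + D)) F)ˣ,
        (q : ℝ) ^ (N - ((g : Matrix (Fin (N + D)) (Fin (N + D)) F).submatrix
          (Fin.castLE (by omega)) (Fin.castLE (by omega)) : Matrix (Fin N) (Fin N) F).rank)) /
      (Nat.card (Matrix (Fin (N + D)) (Fin (N + D)) F)ˣ : ℝ) =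
      (1 - ((q : ℝ)⁻¹) ^ D + 1 - ((q : ℝ)⁻¹) ^ N) / (1 - ((q : ℝ)⁻¹) ^ (N + D)))
    ∧
    ((∑ M : Matrix (Fin N) (Fin N) F, (q : ℝ) ^ (N - M.rank)) /
        (Nat.card (Matrix (Fin N) (Fin N) F) : ℝ) = 2 - ((q : ℝ)⁻¹) ^ N) := by
  have hq2 : 2 ≤ q := by rw [hq]; exact Fintype.one_lt_card
  have hqR : (1 : ℝ) < (q : ℝ) := by exact_mod_cast hq2
  have hq0 : (q : ℝ) ≠ 0 := by positivity
  have hcast : ∀ k : ℕ, ((q ^ k - 1 : ℕ) : ℝ) = (q : ℝ) ^ k - 1 := by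
    intro k
    have h1 : 1 ≤ q ^ k := Nat.one_le_pow _ _ (by omega)
    rw [Nat.cast_sub h1]; push_cast; ring
  have hcardfun : ∀ k : ℕ, Fintype.card (Fin k → F) = q ^ k := by
    intro k; rw [Fintype.card_fun, Fintype.card_fin, hq]
  constructor
  · -- part 1
    set n := N + D with hn
    have hle : N ≤ N + D := by omega
    -- the reference nonzero vector
    set e₁ : Fin n → F := fun _ => 1 with he₁def
    have he₁ : e₁ ≠ 0 := by
      intro h
      exact one_ne_zero (congrFun h ⟨0, by omega⟩)
    set c := Fintype.card {g : (Matrix (Fin n) (Fin n) F)ˣ // (g : Matrix (Fin n) (Fin n) F).mulVec e₁ = e₁} with hc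
    -- rewrite summand as kernel cardinality
    have step1 : ∀ g : (Matrix (Fin n) (Fin n) F)ˣ, (q : ℝ) ^ (N - ((g : Matrix (Fin n) (Fin n) F).submatrix
          (Fin.castLE hle) (Fin.castLE hle) : Matrix (Fin N) (Fin N) F).rank) =
        (Fintype.card {v : Fin N → F //
          ((g : Matrix (Fin n) (Fin n) F).submatrix (Fin.castLE hle)
            (Fin.castLE hle)).mulVec v = 0} : ℝ) := by
      intro g
      rw [card_ker, hq]
      push_cast
      rfl
    rw [Finset.sum_congr rfl (fun g _ => step1 g), ← Nat.cast_sum]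
    -- nat counting
    have hswap : (∑ g : (Matrix (Fin n) (Fin n) F)ˣ, Fintype.card {v : Fin N → F //
          ((g : Matrix (Fin n) (Fin n) F).submatrix (Fin.castLE hle)
            (Fin.castLE hle)).mulVec v = 0}) =
        ∑ v : Fin N → F, Fintype.card {g : (Matrix (Fin n) (Fin n) F)ˣ //
          ((g : Matrix (Fin n) (Fin n) F).submatrix (Fin.castLE hle)
            (Fin.castLE hle)).mulVec v = 0} :=
      sum_card_swap _
    -- value at v = 0
    have hzero : Fintype.card {g : (Matrix (Fin n) (Fin n) F)ˣ //
          ((g : Matrix (Fin n) (Fin n) F).submatrix (Fin.castLE hle)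
            (Fin.castLE hle)).mulVec (0 : Fin N → F) = 0} = Fintype.card (Matrix (Fin n) (Fin n) F)ˣ :=
      Fintype.card_congr (Equiv.subtypeUnivEquiv (fun g => Matrix.mulVec_zero _))
    -- value at v ≠ 0
    have hnonzero : ∀ v : Fin N → F, v ≠ 0 → Fintype.card {g : (Matrix (Fin n) (Fin n) F)ˣ //
          ((g : Matrix (Fin n) (Fin n) F).submatrix (Fin.castLE hle)
            (Fin.castLE hle)).mulVec v = 0} = (q ^ D - 1) * c := by
      intro v hv
      have e2 : {g : (Matrix (Fin n) (Fin n) F)ˣ // ((g : Matrix (Fin n) (Fin n) F).submatrix (Fin.castLE hle)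
            (Fin.castLE hle)).mulVec v = 0} ≃
          {g : (Matrix (Fin n) (Fin n) F)ˣ // (fun u : Fin n → F => ∀ i : Fin N, u (Fin.castLE hle i) = 0)
            ((g : Matrix (Fin n) (Fin n) F).mulVec (Fin.append v 0))} :=
        Equiv.subtypeEquivRight (fun g => submatrix_mulVec_eq hle _ v)
      rw [Fintype.card_congr e2,
        card_pred_mulVec (fun u : Fin n → F => ∀ i : Fin N, u (Fin.castLE hle i) = 0)
          (Fin.append v 0) e₁ (append_ne_zero v hv) he₁]
      congr 1
      have hfilter : Finset.univ.filter
            (fun u : Fin n → F => (∀ i : Fin N, u (Fin.castLE hle i) = 0) ∧ u ≠ 0) =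
          (Finset.univ.filter
            (fun u : Fin n → F => ∀ i : Fin N, u (Fin.castLE hle i) = 0)).erase 0 := by
        ext u
        simp only [Finset.mem_filter, Finset.mem_univ, true_and, Finset.mem_erase]
        tauto
      rw [hfilter, Finset.card_erase_of_mem (by simp), ← Fintype.card_subtype, card_Z N D hle, hq]
    -- total count
    have hcardG : Fintype.card (Matrix (Fin n) (Fin n) F)ˣ = (q ^ n - 1) * c := by
      have e3 : (Matrix (Fin n) (Fin n) F)ˣ ≃ {g : (Matrix (Fin n) (Fin n) F)ˣ // (fun _ : Fin n → F => True)
          ((g : Matrix (Fin n) (Fin n) F).mulVec e₁)} :=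
        (Equiv.subtypeUnivEquiv (fun g => trivial)).symm
      rw [Fintype.card_congr e3, card_pred_mulVec (fun _ : Fin n → F => True) e₁ e₁ he₁ he₁]
      congr 1
      have hfilter : Finset.univ.filter (fun u : Fin n → F => True ∧ u ≠ 0) =
          (Finset.univ : Finset (Fin n → F)).erase 0 := by
        ext u; simp
      rw [hfilter, Finset.card_erase_of_mem (Finset.mem_univ _), Finset.card_univ, hcardfun]
    have htotal : (∑ v : Fin N → F, Fintype.card {g : (Matrix (Fin n) (Fin n) F)ˣ //
          ((g : Matrix (Fin n) (Fin n) F).submatrix (Fin.castLE hle)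
            (Fin.castLE hle)).mulVec v = 0}) =
        (q ^ n - 1) * c + (q ^ N - 1) * ((q ^ D - 1) * c) := by
      rw [← Finset.add_sum_erase _ _ (Finset.mem_univ (0 : Fin N → F)), hzero, hcardG]
      congr 1
      rw [Finset.sum_congr rfl (fun v hv => hnonzero v (Finset.mem_erase.1 hv).1),
        Finset.sum_const, smul_eq_mul, Finset.card_erase_of_mem (Finset.mem_univ _),
        Finset.card_univ, hcardfun]
    rw [hswap, htotal, Nat.card_eq_fintype_card, hcardG]
    -- real algebra
    have hc0 : (c : ℝ) ≠ 0 := by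
      have : Fintype.card (Matrix (Fin n) (Fin n) F)ˣ ≠ 0 := Fintype.card_ne_zero
      rw [hcardG] at this
      exact_mod_cast fun h => this (by exact_mod_cast mul_eq_zero_of_right _ (by exact_mod_cast h))
    have hqn1 : (q : ℝ) ^ n - 1 ≠ 0 := by
      have : (1 : ℝ) < (q : ℝ) ^ n := one_lt_pow₀ hqR (by omega)
      linarith
    have hden : 1 - ((q : ℝ)⁻¹) ^ (N + D) ≠ 0 := by
      have h1 : ((q : ℝ)⁻¹) ^ (N + D) < 1 :=
        pow_lt_one₀ (by positivity) (inv_lt_one_of_one_lt₀ hqR) (by omega)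
      linarith
    push_cast [hcast]
    rw [div_eq_div_iff (by
        intro h
        rcases mul_eq_zero.1 h with h | h
        · exact hqn1 h
        · exact hc0 h) hden]
    simp only [inv_pow, hn]
    field_simp
    ring
  · -- part 2
    obtain ⟨m, rfl⟩ : ∃ m, N = m + 1 := ⟨N - 1, by omega⟩
    set N := m + 1 with hNdef
    have step1 : ∀ M : Matrix (Fin N) (Fin N) F, (q : ℝ) ^ (N - M.rank) =
        (Fintype.card {v : Fin N → F // M.mulVec v = 0} : ℝ) := by
      intro M
      rw [card_ker, hq]
      push_cast
      rfl
    rw [Finset.sum_congr rfl (fun M _ => step1 M), ← Nat.cast_sum]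
    have hswap := sum_card_swap (fun (M : Matrix (Fin N) (Fin N) F) (v : Fin N → F) =>
      M.mulVec v = 0)
    have hzero : Fintype.card {M : Matrix (Fin N) (Fin N) F // M.mulVec (0 : Fin N → F) = 0}
        = q ^ (N * N) := by
      rw [Fintype.card_congr (Equiv.subtypeUnivEquiv (fun M => Matrix.mulVec_zero _))]
      rw [Fintype.card_congr (Matrix.of : (Fin N → Fin N → F) ≃ _).symm, Fintype.card_fun,
        hcardfun, Fintype.card_fin, ← pow_mul]
    have htotal : (∑ M : Matrix (Fin N) (Fin N) F,
          Fintype.card {v : Fin N → F // M.mulVec v = 0}) =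
        q ^ (N * N) + (q ^ N - 1) * (q ^ (N - 1)) ^ N := by
      rw [hswap, ← Finset.add_sum_erase _ _ (Finset.mem_univ (0 : Fin N → F)), hzero]
      congr 1
      have hconst : ∀ v ∈ (Finset.univ : Finset (Fin N → F)).erase 0,
          Fintype.card {M : Matrix (Fin N) (Fin N) F // M.mulVec v = 0} =
            (q ^ (N - 1)) ^ N := by
        intro v hv
        rw [card_matrix_ann N v (Finset.mem_erase.1 hv).1, hq]
      rw [Finset.sum_congr rfl hconst,
        Finset.sum_const, smul_eq_mul, Finset.card_erase_of_mem (Finset.mem_univ _),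
        Finset.card_univ, hcardfun]
    rw [htotal, Nat.card_eq_fintype_card,
      Fintype.card_congr (Matrix.of : (Fin N → Fin N → F) ≃ _).symm, Fintype.card_fun,
      hcardfun, Fintype.card_fin, ← pow_mul]
    have hNN : N - 1 = m := by omega
    rw [hNN]
    push_cast [hcast]
    have hpow : ((q : ℝ)) ^ (N * N) ≠ 0 := by positivity
    simp only [inv_pow, hNdef]
    field_simp
    ring
end
end
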